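/- For i = 1, 2, 3 let mᵢ ∈ ℕ, nᵢ ∈ ℕ with nᵢ ≥ 1, let aᵢ, bᵢ, cᵢ, dᵢ ∈ ℝ, and let Zᵢ : ℝ → ℝ be continuously differentiable. Define uᵢ = (uᵢ₁, uᵢ₂, uᵢ₃) : ℝ³ → ℝ³ by uᵢ₁(x,y,z) = Zᵢ(z)·P^u_{mᵢ,nᵢ}(x,y), uᵢ₂(x,y,z) = −(mᵢ/nᵢ)·Zᵢ(z)·P^v_{mᵢ,nᵢ}(x,y), uᵢ₃ = 0, where P^u_{mᵢ,nᵢ}, P^v_{mᵢ,nᵢ} use the coefficients aᵢ, bᵢ, cᵢ, dᵢ. Suppose one of the following holds: cᵢ = dᵢ = 0 for all i, or bᵢ = cᵢ = 0 for all i, or aᵢ = cᵢ = 0 for all i. Then ∫_Ω ((u₁·∇)u₂) · u₃ = 0, where Ω = [0,2π]²×[−1,1], ((u₁·∇)u₂)_j = Σ_k u₁ₖ ∂_k u₂ⱼ, and · is the Euclidean scalar product in ℝ³. -/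

import Mathlib

open Real MeasureTheory

/-- The periodic profile 𝒫ᵘ_{m,n}. -/
noncomputable def Pu (m n : ℕ) (a b c d : ℝ) (x y : ℝ) : ℝ :=
  a * Real.cos (m * x) * Real.sin (n * y) - b * Real.sin (m * x) * Real.sin (n * y)
    - c * Real.sin (m * x) * Real.cos (n * y) + d * Real.cos (m * x) * Real.cos (n * y)

/-- The periodic profile 𝒫ᵛ_{m,n}. -/
noncomputable def Pv (m n : ℕ) (a b c d : ℝ) (x y : ℝ) : ℝ :=
  a * Real.sin (m * x) * Real.cos (n * y) + b * Real.cos (m * x) * Real.cos (n * y)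
    - c * Real.cos (m * x) * Real.sin (n * y) - d * Real.sin (m * x) * Real.sin (n * y)

/-- x-derivative of `Pu`. -/
noncomputable def Pux (m n : ℕ) (a b c d : ℝ) (x y : ℝ) : ℝ :=
  -(a * m * Real.sin (m * x) * Real.sin (n * y)) - b * m * Real.cos (m * x) * Real.sin (n * y)
    - c * m * Real.cos (m * x) * Real.cos (n * y) - d * m * Real.sin (m * x) * Real.cos (n * y)

/-- y-derivative of `Pu`. -/
noncomputable def Puy (m n : ℕ) (a b c d : ℝ) (x y : ℝ) : ℝ :=
  a * n * Real.cos (m * x) * Real.cos (n * y) - b * n * Real.sin (m * x) * Real.cos (n * y)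
    + c * n * Real.sin (m * x) * Real.sin (n * y) - d * n * Real.cos (m * x) * Real.sin (n * y)

/-- x-derivative of `Pv`. -/
noncomputable def Pvx (m n : ℕ) (a b c d : ℝ) (x y : ℝ) : ℝ :=
  a * m * Real.cos (m * x) * Real.cos (n * y) - b * m * Real.sin (m * x) * Real.cos (n * y)
    + c * m * Real.sin (m * x) * Real.sin (n * y) - d * m * Real.cos (m * x) * Real.sin (n * y)

/-- y-derivative of `Pv`. -/
noncomputable def Pvy (m n : ℕ) (a b c d : ℝ) (x y : ℝ) : ℝ :=
  -(a * n * Real.sin (m * x) * Real.sin (n * y)) - b * n * Real.cos (m * x) * Real.sin (n * y)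
    - c * n * Real.cos (m * x) * Real.cos (n * y) - d * n * Real.sin (m * x) * Real.cos (n * y)

lemma hasDerivAt_cos_mul (k x : ℝ) :
    HasDerivAt (fun t : ℝ => Real.cos (k * t)) (-(k * Real.sin (k * x))) x := by
  have h := (Real.hasDerivAt_cos (k * x)).comp x ((hasDerivAt_id x).const_mul k)
  exact h.congr_deriv (by ring)

lemma hasDerivAt_sin_mul (k x : ℝ) :
    HasDerivAt (fun t : ℝ => Real.sin (k * t)) (k * Real.cos (k * x)) x := by
  have h := (Real.hasDerivAt_sin (k * x)).comp x ((hasDerivAt_id x).const_mul k)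
  exact h.congr_deriv (by ring)

lemma hasDerivAt_Pu_x (m n : ℕ) (a b c d y x : ℝ) :
    HasDerivAt (fun x => Pu m n a b c d x y) (Pux m n a b c d x y) x := by
  have h := (((((hasDerivAt_cos_mul (m : ℝ) x).const_mul a).mul_const (Real.sin (n * y))).sub
      ((((hasDerivAt_sin_mul (m : ℝ) x).const_mul b).mul_const (Real.sin (n * y))))).sub
      ((((hasDerivAt_sin_mul (m : ℝ) x).const_mul c).mul_const (Real.cos (n * y))))).add
      ((((hasDerivAt_cos_mul (m : ℝ) x).const_mul d).mul_const (Real.cos (n * y))))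
  unfold Pu Pux
  exact h.congr_deriv (by ring)

lemma hasDerivAt_Pu_y (m n : ℕ) (a b c d x y : ℝ) :
    HasDerivAt (fun y => Pu m n a b c d x y) (Puy m n a b c d x y) y := by
  have h := ((((hasDerivAt_sin_mul (n : ℝ) y).const_mul (a * Real.cos (m * x))).sub
      (((hasDerivAt_sin_mul (n : ℝ) y).const_mul (b * Real.sin (m * x))))).sub
      (((hasDerivAt_cos_mul (n : ℝ) y).const_mul (c * Real.sin (m * x))))).add
      (((hasDerivAt_cos_mul (n : ℝ) y).const_mul (d * Real.cos (m * x))))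
  unfold Pu Puy
  exact h.congr_deriv (by ring)

lemma hasDerivAt_Pv_x (m n : ℕ) (a b c d y x : ℝ) :
    HasDerivAt (fun x => Pv m n a b c d x y) (Pvx m n a b c d x y) x := by
  have h := (((((hasDerivAt_sin_mul (m : ℝ) x).const_mul a).mul_const (Real.cos (n * y))).add
      ((((hasDerivAt_cos_mul (m : ℝ) x).const_mul b).mul_const (Real.cos (n * y))))).sub
      ((((hasDerivAt_cos_mul (m : ℝ) x).const_mul c).mul_const (Real.sin (n * y))))).sub
      ((((hasDerivAt_sin_mul (m : ℝ) x).const_mul d).mul_const (Real.sin (n * y))))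
  unfold Pv Pvx
  exact h.congr_deriv (by ring)

lemma hasDerivAt_Pv_y (m n : ℕ) (a b c d x y : ℝ) :
    HasDerivAt (fun y => Pv m n a b c d x y) (Pvy m n a b c d x y) y := by
  have h := ((((hasDerivAt_cos_mul (n : ℝ) y).const_mul (a * Real.sin (m * x))).add
      (((hasDerivAt_cos_mul (n : ℝ) y).const_mul (b * Real.cos (m * x))))).sub
      (((hasDerivAt_sin_mul (n : ℝ) y).const_mul (c * Real.cos (m * x))))).sub
      (((hasDerivAt_sin_mul (n : ℝ) y).const_mul (d * Real.sin (m * x))))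
  unfold Pv Pvy
  exact h.congr_deriv (by ring)

lemma sin_refl (k : ℕ) (t : ℝ) :
    Real.sin ((k : ℝ) * (2 * π - t)) = -Real.sin ((k : ℝ) * t) := by
  have h1 : Real.sin ((k : ℝ) * (2 * π)) = 0 := by
    have := Real.sin_nat_mul_pi (2 * k)
    push_cast at this
    rw [show (k : ℝ) * (2 * π) = 2 * (k : ℝ) * π by ring]
    exact this
  have h2 : Real.cos ((k : ℝ) * (2 * π)) = 1 := Real.cos_nat_mul_two_pi k
  rw [mul_sub, Real.sin_sub, h1, h2]
  ring

lemma cos_refl (k : ℕ) (t : ℝ) :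
    Real.cos ((k : ℝ) * (2 * π - t)) = Real.cos ((k : ℝ) * t) := by
  have h1 : Real.sin ((k : ℝ) * (2 * π)) = 0 := by
    have := Real.sin_nat_mul_pi (2 * k)
    push_cast at this
    rw [show (k : ℝ) * (2 * π) = 2 * (k : ℝ) * π by ring]
    exact this
  have h2 : Real.cos ((k : ℝ) * (2 * π)) = 1 := Real.cos_nat_mul_two_pi k
  rw [mul_sub, Real.cos_sub, h1, h2]
  ring

lemma refl_inv (g : ℝ → ℝ) :
    (∫ y in Set.Icc (0 : ℝ) (2 * π), g (2 * π - y)) = ∫ y in Set.Icc (0 : ℝ) (2 * π), g y := by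
  have hle : (0 : ℝ) ≤ 2 * π := by positivity
  rw [integral_Icc_eq_integral_Ioc, integral_Icc_eq_integral_Ioc,
    ← intervalIntegral.integral_of_le hle, ← intervalIntegral.integral_of_le hle]
  simpa using intervalIntegral.integral_comp_sub_left g (2 * π)

lemma refl_zero (g : ℝ → ℝ) (h : ∀ y, g (2 * π - y) = -g y) :
    (∫ y in Set.Icc (0 : ℝ) (2 * π), g y) = 0 := by
  have h1 := refl_inv g
  simp only [h, integral_neg] at h1
  linarith

/-- The closed form of the integrand. -/
noncomputable def trip (m n : Fin 3 → ℕ) (a b c d : Fin 3 → ℝ) (Z : Fin 3 → ℝ → ℝ)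
    (x y z : ℝ) : ℝ :=
  (Z 0 z * Pu (m 0) (n 0) (a 0) (b 0) (c 0) (d 0) x y
      * (Z 1 z * Pux (m 1) (n 1) (a 1) (b 1) (c 1) (d 1) x y)
    + -((m 0 : ℝ) / (n 0 : ℝ)) * Z 0 z * Pv (m 0) (n 0) (a 0) (b 0) (c 0) (d 0) x y
      * (Z 1 z * Puy (m 1) (n 1) (a 1) (b 1) (c 1) (d 1) x y))
    * (Z 2 z * Pu (m 2) (n 2) (a 2) (b 2) (c 2) (d 2) x y)
  + (Z 0 z * Pu (m 0) (n 0) (a 0) (b 0) (c 0) (d 0) x y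
      * (-((m 1 : ℝ) / (n 1 : ℝ)) * Z 1 z * Pvx (m 1) (n 1) (a 1) (b 1) (c 1) (d 1) x y)
    + -((m 0 : ℝ) / (n 0 : ℝ)) * Z 0 z * Pv (m 0) (n 0) (a 0) (b 0) (c 0) (d 0) x y
      * (-((m 1 : ℝ) / (n 1 : ℝ)) * Z 1 z * Pvy (m 1) (n 1) (a 1) (b 1) (c 1) (d 1) x y))
    * (-((m 2 : ℝ) / (n 2 : ℝ)) * Z 2 z * Pv (m 2) (n 2) (a 2) (b 2) (c 2) (d 2) x y)

/-- Vanishing of the trilinear term ∫_Ω ((u₁·∇)u₂)·u₃ for three constant-pressure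
Stokes eigenfunction shaped fields whose coefficients follow one of the three
admissible patterns. -/
theorem stmt_17 (m n : Fin 3 → ℕ) (hn : ∀ i, 1 ≤ n i)
    (a b c d : Fin 3 → ℝ) (Z : Fin 3 → ℝ → ℝ) (hZ : ∀ i, ContDiff ℝ 1 (Z i))
    (U : Fin 3 → Fin 3 → ℝ → ℝ → ℝ → ℝ)
    (hU₁ : ∀ i x y z, U i 0 x y z = Z i z * Pu (m i) (n i) (a i) (b i) (c i) (d i) x y)
    (hU₂ : ∀ i x y z, U i 1 x y z
      = -((m i : ℝ) / (n i : ℝ)) * Z i z * Pv (m i) (n i) (a i) (b i) (c i) (d i) x y)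
    (hU₃ : ∀ i x y z, U i 2 x y z = 0)
    (hcoef : (∀ i, c i = 0 ∧ d i = 0) ∨ (∀ i, b i = 0 ∧ c i = 0) ∨
      (∀ i, a i = 0 ∧ c i = 0)) :
    ∫ p in Set.Icc ((0 : ℝ), (0 : ℝ), (-1 : ℝ)) (2 * π, 2 * π, (1 : ℝ)),
      ∑ j : Fin 3,
        (U 0 0 p.1 p.2.1 p.2.2 * deriv (fun x' => U 1 j x' p.2.1 p.2.2) p.1
          + U 0 1 p.1 p.2.1 p.2.2 * deriv (fun y' => U 1 j p.1 y' p.2.2) p.2.1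
          + U 0 2 p.1 p.2.1 p.2.2 * deriv (fun z' => U 1 j p.1 p.2.1 z') p.2.2)
          * U 2 j p.1 p.2.1 p.2.2 = 0 := by
  have hfun : ∀ p : ℝ × ℝ × ℝ,
      (∑ j : Fin 3,
        (U 0 0 p.1 p.2.1 p.2.2 * deriv (fun x' => U 1 j x' p.2.1 p.2.2) p.1
          + U 0 1 p.1 p.2.1 p.2.2 * deriv (fun y' => U 1 j p.1 y' p.2.2) p.2.1
          + U 0 2 p.1 p.2.1 p.2.2 * deriv (fun z' => U 1 j p.1 p.2.1 z') p.2.2)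
          * U 2 j p.1 p.2.1 p.2.2)
      = trip m n a b c d Z p.1 p.2.1 p.2.2 := by
    intro p
    set x := p.1
    set y := p.2.1
    set z := p.2.2
    have e1 : (fun x' => U 1 0 x' y z)
        = fun x' => Z 1 z * Pu (m 1) (n 1) (a 1) (b 1) (c 1) (d 1) x' y :=
      funext fun x' => hU₁ 1 x' y z
    have e2 : (fun y' => U 1 0 x y' z)
        = fun y' => Z 1 z * Pu (m 1) (n 1) (a 1) (b 1) (c 1) (d 1) x y' :=
      funext fun y' => hU₁ 1 x y' z
    have e3 : (fun x' => U 1 1 x' y z)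
        = fun x' => -((m 1 : ℝ) / (n 1 : ℝ)) * Z 1 z
            * Pv (m 1) (n 1) (a 1) (b 1) (c 1) (d 1) x' y :=
      funext fun x' => hU₂ 1 x' y z
    have e4 : (fun y' => U 1 1 x y' z)
        = fun y' => -((m 1 : ℝ) / (n 1 : ℝ)) * Z 1 z
            * Pv (m 1) (n 1) (a 1) (b 1) (c 1) (d 1) x y' :=
      funext fun y' => hU₂ 1 x y' z
    have d1 : deriv (fun x' => U 1 0 x' y z) x
        = Z 1 z * Pux (m 1) (n 1) (a 1) (b 1) (c 1) (d 1) x y := by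
      rw [e1]
      exact ((hasDerivAt_Pu_x (m 1) (n 1) (a 1) (b 1) (c 1) (d 1) y x).const_mul (Z 1 z)).deriv
    have d2 : deriv (fun y' => U 1 0 x y' z) y
        = Z 1 z * Puy (m 1) (n 1) (a 1) (b 1) (c 1) (d 1) x y := by
      rw [e2]
      exact ((hasDerivAt_Pu_y (m 1) (n 1) (a 1) (b 1) (c 1) (d 1) x y).const_mul (Z 1 z)).deriv
    have d3 : deriv (fun x' => U 1 1 x' y z) x
        = -((m 1 : ℝ) / (n 1 : ℝ)) * Z 1 z * Pvx (m 1) (n 1) (a 1) (b 1) (c 1) (d 1) x y := by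
      rw [e3]
      exact ((hasDerivAt_Pv_x (m 1) (n 1) (a 1) (b 1) (c 1) (d 1) y x).const_mul
        (-((m 1 : ℝ) / (n 1 : ℝ)) * Z 1 z)).deriv
    have d4 : deriv (fun y' => U 1 1 x y' z) y
        = -((m 1 : ℝ) / (n 1 : ℝ)) * Z 1 z * Pvy (m 1) (n 1) (a 1) (b 1) (c 1) (d 1) x y := by
      rw [e4]
      exact ((hasDerivAt_Pv_y (m 1) (n 1) (a 1) (b 1) (c 1) (d 1) x y).const_mul
        (-((m 1 : ℝ) / (n 1 : ℝ)) * Z 1 z)).deriv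
    rw [Fin.sum_univ_three, hU₁ 0 x y z, hU₂ 0 x y z, hU₃ 0 x y z, hU₁ 2 x y z, hU₂ 2 x y z,
      hU₃ 2 x y z, d1, d2, d3, d4]
    unfold trip
    ring
  have hZ0 : Continuous (Z 0) := (hZ 0).continuous
  have hZ1 : Continuous (Z 1) := (hZ 1).continuous
  have hZ2 : Continuous (Z 2) := (hZ 2).continuous
  have hcont : Continuous (fun p : ℝ × ℝ × ℝ => trip m n a b c d Z p.1 p.2.1 p.2.2) := by
    unfold trip Pu Pv Pux Puy Pvx Pvy
    fun_prop
  have hint1 : IntegrableOn (fun p : ℝ × ℝ × ℝ => trip m n a b c d Z p.1 p.2.1 p.2.2)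
      (Set.Icc (0 : ℝ) (2 * π) ×ˢ Set.Icc ((0 : ℝ), (-1 : ℝ)) (2 * π, (1 : ℝ)))
      (volume.prod volume) := by
    have h : IntegrableOn (fun p : ℝ × ℝ × ℝ => trip m n a b c d Z p.1 p.2.1 p.2.2)
        (Set.Icc ((0 : ℝ), (0 : ℝ), (-1 : ℝ)) (2 * π, 2 * π, (1 : ℝ))) volume :=
      hcont.integrableOn_Icc
    rwa [Set.Icc_prod_eq, Measure.volume_eq_prod] at h
  have hint2 : ∀ x : ℝ, IntegrableOn (fun q : ℝ × ℝ => trip m n a b c d Z x q.1 q.2)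
      (Set.Icc (0 : ℝ) (2 * π) ×ˢ Set.Icc (-1 : ℝ) 1) (volume.prod volume) := by
    intro x
    have h : IntegrableOn (fun q : ℝ × ℝ => trip m n a b c d Z x q.1 q.2)
        (Set.Icc ((0 : ℝ), (-1 : ℝ)) (2 * π, (1 : ℝ))) volume := by
      apply Continuous.integrableOn_Icc
      unfold trip Pu Pv Pux Puy Pvx Pvy
      fun_prop
    rwa [Set.Icc_prod_eq, Measure.volume_eq_prod] at h
  have hW : ∀ x : ℝ, (∫ q in Set.Icc ((0 : ℝ), (-1 : ℝ)) (2 * π, (1 : ℝ)),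
        trip m n a b c d Z x q.1 q.2)
      = ∫ y in Set.Icc (0 : ℝ) (2 * π), ∫ z' in Set.Icc (-1 : ℝ) 1,
          trip m n a b c d Z x y z' := by
    intro x
    rw [show Set.Icc ((0 : ℝ), (-1 : ℝ)) (2 * π, (1 : ℝ))
        = Set.Icc (0 : ℝ) (2 * π) ×ˢ Set.Icc (-1 : ℝ) 1 from by rw [Set.Icc_prod_eq],
      Measure.volume_eq_prod, setIntegral_prod _ (hint2 x)]
  refine Eq.trans (setIntegral_congr_fun measurableSet_Icc fun p _ => hfun p) ?_
  rw [show Set.Icc ((0 : ℝ), (0 : ℝ), (-1 : ℝ)) (2 * π, 2 * π, (1 : ℝ))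
      = Set.Icc (0 : ℝ) (2 * π) ×ˢ Set.Icc ((0 : ℝ), (-1 : ℝ)) (2 * π, (1 : ℝ)) from by
        rw [Set.Icc_prod_eq],
    Measure.volume_eq_prod, setIntegral_prod _ hint1]
  simp only [hW]
  rcases hcoef with hc | hc | hc
  · have hodd : ∀ x y z', trip m n a b c d Z x (2 * π - y) z'
        = -trip m n a b c d Z x y z' := by
      intro x y z'
      simp only [trip, Pu, Pv, Pux, Puy, Pvx, Pvy, (hc 0).1, (hc 0).2, (hc 1).1, (hc 1).2,
        (hc 2).1, (hc 2).2, sin_refl, cos_refl]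
      ring
    have hin : ∀ x : ℝ, (∫ y in Set.Icc (0 : ℝ) (2 * π), ∫ z' in Set.Icc (-1 : ℝ) 1,
        trip m n a b c d Z x y z') = 0 := by
      intro x
      refine refl_zero _ fun y => ?_
      simp only [hodd, integral_neg]
    simp only [hin, integral_zero]
  · have hodd : ∀ x y z', trip m n a b c d Z (2 * π - x) y z'
        = -trip m n a b c d Z x y z' := by
      intro x y z'
      simp only [trip, Pu, Pv, Pux, Puy, Pvx, Pvy, (hc 0).1, (hc 0).2, (hc 1).1, (hc 1).2,
        (hc 2).1, (hc 2).2, sin_refl, cos_refl]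
      ring
    refine refl_zero _ fun x => ?_
    simp only [hodd, integral_neg]
  · have hodd : ∀ x y z', trip m n a b c d Z (2 * π - x) (2 * π - y) z'
        = -trip m n a b c d Z x y z' := by
      intro x y z'
      simp only [trip, Pu, Pv, Pux, Puy, Pvx, Pvy, (hc 0).1, (hc 0).2, (hc 1).1, (hc 1).2,
        (hc 2).1, (hc 2).2, sin_refl, cos_refl]
      ring
    refine refl_zero _ fun x => ?_
    have h1 : (∫ y in Set.Icc (0 : ℝ) (2 * π), ∫ z' in Set.Icc (-1 : ℝ) 1,
          trip m n a b c d Z (2 * π - x) y z')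
        = ∫ y in Set.Icc (0 : ℝ) (2 * π), ∫ z' in Set.Icc (-1 : ℝ) 1,
          trip m n a b c d Z (2 * π - x) (2 * π - y) z' :=
      (refl_inv fun y => ∫ z' in Set.Icc (-1 : ℝ) 1,
        trip m n a b c d Z (2 * π - x) y z').symm
    rw [h1]
    simp only [hodd, integral_neg]
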